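/- Let D ⊆ ℝⁿ, f : D → ℝⁿ, f measurable, h : D → Y with Y finite, and suppose the strongest ℓ-complete abstraction of the induced transition system is deterministic, i.e., for every realizable ℓ-sequence s = y₁…y_ℓ there is exactly one y′ ∈ Y such that y₂…y_ℓ y′ is realizable. Then for every realizable ℓ-sequence s and every y ∈ Y, the set Pre_D([s]) ∩ [y] (points in the output class of y whose image under f lies in [s]) is either empty or equals the full equivalence class [y·y₁…y_{ℓ-1}] of the ℓ-sequence y·y₁…y_{ℓ-1}. -/

import Mathlib

/-- Equivalence class of an `ℓ`-sequence of outputs. -/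
def eqCls {α Y : Type*} (f : α → α) (h : α → Y) {ℓ : ℕ} (s : Fin ℓ → Y) : Set α :=
  {x | ∀ j : Fin ℓ, h (f^[(j : ℕ)] x) = s j}

/-- If the strongest `ℓ`-complete abstraction is deterministic (realizable one-symbol
extensions of a realizable `ℓ`-sequence are unique), then for every realizable
`ℓ`-sequence `s` and output `y`, the set `Pre([s]) ∩ [y]` is either empty or equal to the
full equivalence class `[y·y₁…y_{ℓ-1}]`. -/
theorem stmt_18 {α Y : Type*} [Finite Y] (f : α → α) (h : α → Y) (m : ℕ)
    (hdet : ∀ (s : Fin (m + 1) → Y), (eqCls f h s).Nonempty →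
      ∀ y' y'' : Y, (eqCls f h (Fin.snoc s y')).Nonempty →
        (eqCls f h (Fin.snoc s y'')).Nonempty → y' = y'') :
    ∀ (s : Fin (m + 1) → Y), (eqCls f h s).Nonempty → ∀ y : Y,
      (f ⁻¹' eqCls f h s ∩ {x | h x = y} = ∅) ∨
      (f ⁻¹' eqCls f h s ∩ {x | h x = y} = eqCls f h (Fin.cons y (Fin.init s))) := by
  intro s hs y
  rcases Set.eq_empty_or_nonempty (f ⁻¹' eqCls f h s ∩ {x | h x = y}) with he | hne
  · exact Or.inl he
  right
  obtain ⟨x, hx1, hx2⟩ := hne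
  have hx1' : ∀ j : Fin (m + 1), h (f^[(j : ℕ)] (f x)) = s j := hx1
  have hx2' : h x = y := hx2
  set t : Fin (m + 1) → Y := Fin.cons y (Fin.init s) with ht_def
  ext z
  constructor
  · rintro ⟨hz1, hz2⟩
    intro j
    refine Fin.cases ?_ ?_ j
    · simpa [ht_def] using hz2
    · intro i
      have := hz1 i.castSucc
      simp only [ht_def, Fin.cons_succ, Fin.init, Fin.val_succ]
      rw [Function.iterate_succ_apply]
      simpa using this
  · intro hz
    have hz0 : h z = y := by simpa [ht_def] using hz 0
    -- t is realizable (witness z)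
    have ht : (eqCls f h t).Nonempty := ⟨z, hz⟩
    -- extension by h (f^[m+1] z) is realizable (witness z)
    have h1 : (eqCls f h (Fin.snoc t (h (f^[m + 1] z)))).Nonempty := by
      refine ⟨z, ?_⟩
      intro j
      refine Fin.lastCases ?_ ?_ j
      · simp
      · intro i
        simpa using hz i
    -- extension by s (last m) is realizable (witness x)
    have h2 : (eqCls f h (Fin.snoc t (s (Fin.last m)))).Nonempty := by
      refine ⟨x, ?_⟩
      intro j
      refine Fin.lastCases ?_ ?_ j
      · have := hx1' (Fin.last m)
        simpa [Function.iterate_succ_apply] using this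
      · intro i
        refine Fin.cases ?_ ?_ i
        · simpa [ht_def, Fin.snoc, Fin.cons] using hx2'
        · intro k
          have := hx1' k.castSucc
          simp only [Fin.snoc_castSucc, ht_def, Fin.cons_succ, Fin.init, Fin.coe_castSucc,
            Fin.val_succ]
          rw [Function.iterate_succ_apply]
          simpa using this
    have hlast : h (f^[m + 1] z) = s (Fin.last m) := hdet t ht _ _ h1 h2
    constructor
    · intro j
      refine Fin.lastCases ?_ ?_ j
      · rw [← Function.iterate_succ_apply]
        simpa using hlast
      · intro i
        have := hz i.succ
        simp only [ht_def, Fin.cons_succ, Fin.init, Fin.val_succ] at this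
        rw [show ((i.castSucc : Fin (m+1)) : ℕ) = (i : ℕ) from rfl, ← this,
          ← Function.iterate_succ_apply]
    · exact hz0
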